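/- arXiv:0812.3698 — 2 statements merged into one kernel-verified Lean document; each statement's English description precedes it below -/
import Mathlib

section
/- In the IMU model, suppose each D_{m,kj} is a linear function of a single random variable η_{m,k}, i.e. the k-th row satisfies D_1^{(k)} = α_k + β_k η_{1,k} for fixed row vectors α_k, β_k. With d = (d_1,…,d_K) = (E η_{1,1},…,E η_{1,K}), the matrices in the asymptotic variance of Corollary 3.1 satisfy Σ_D = (∂v/∂d)′ diag(Var(η_{1,1})/v_1,…,Var(η_{1,K})/v_K) (∂v/∂d) and Σ_{Dξ} = (∂v/∂d)′ diag(Cov(η_{1,1},ξ_{1,1})/v_1,…,Cov(η_{1,K},ξ_{1,K})/v_K) (∂v/∂θ). -/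
open MeasureTheory ProbabilityTheory Filter Asymptotics Matrix Topology

noncomputable section

/-- The covariance of two real-valued random variables. -/
def rcov {Ω : Type*} [MeasurableSpace Ω] (μ : Measure Ω) (f g : Ω → ℝ) : ℝ :=
  (∫ ω, f ω * g ω ∂μ) - (∫ ω, f ω ∂μ) * (∫ ω, g ω ∂μ)

/-- A random vector is centered Gaussian with covariance matrix `S` iff every linear
combination of its coordinates is a (possibly degenerate) centered one-dimensional
Gaussian with the corresponding variance (Cramér–Wold characterization). -/
def IsCenteredGaussian {Ω ι : Type*} [MeasurableSpace Ω] [Fintype ι] (μ : Measure Ω)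
    (V : Ω → ι → ℝ) (S : Matrix ι ι ℝ) : Prop :=
  ∀ c : ι → ℝ,
    μ.map (fun ω => ∑ i, c i * V ω i) =
      gaussianReal 0 (Real.toNNReal (∑ i, ∑ j, c i * S i j * c j))

/-- Convergence in distribution of real-valued random variables to the law `ν`. -/
def TendstoInDistribution {Ω : Type*} [MeasurableSpace Ω] (μ : Measure Ω)
    (Y : ℕ → Ω → ℝ) (ν : Measure ℝ) : Prop :=
  ∀ g : BoundedContinuousFunction ℝ ℝ,
    Tendsto (fun n => ∫ ω, g (Y n ω) ∂μ) atTop (𝓝 (∫ x, g x ∂ν))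

/-- Convergence in distribution of random vectors to the centered multivariate normal
distribution `N(0, S)` (via the Cramér–Wold device). -/
def TendstoGaussian {Ω ι : Type*} [MeasurableSpace Ω] [Fintype ι] (μ : Measure Ω)
    (Y : ℕ → Ω → ι → ℝ) (S : Matrix ι ι ℝ) : Prop :=
  ∀ c : ι → ℝ,
    TendstoInDistribution μ (fun n ω => ∑ i, c i * Y n ω i)
      (gaussianReal 0 (Real.toNNReal (∑ i, ∑ j, c i * S i j * c j)))

/-- A multidimensional (correlated) Wiener process with covariance structure `t ↦ t • Λ`:
it starts at `0`, has a.s. continuous paths, has independent increments, and the increment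
over `[s, t]` is a centered Gaussian vector with covariance matrix `(t - s) • Λ`. -/
def IsWienerProcess {Ω ι : Type*} [MeasurableSpace Ω] [Fintype ι] (μ : Measure Ω)
    (W : ℝ → Ω → ι → ℝ) (L : Matrix ι ι ℝ) : Prop :=
  (∀ᵐ ω ∂μ, W 0 ω = 0) ∧
  (∀ᵐ ω ∂μ, Continuous fun t => W t ω) ∧
  (∀ s t : ℝ, 0 ≤ s → s ≤ t →
    IsCenteredGaussian μ (fun ω i => W t ω i - W s ω i) ((t - s) • L)) ∧
  (∀ ts : ℕ → ℝ, (∀ i, 0 ≤ ts i) → Monotone ts →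
    iIndepFun
      (fun i ω => fun x : ι => W (ts (i + 1)) ω x - W (ts i) ω x) μ)

/-- The immigrated urn (IMU) model.  An urn contains balls of types `0, 1, …, K`; the
number `Z00` of immigration (type-`0`) balls never changes.  For the `m`-th incoming
subject, balls are drawn at random with probabilities proportional to the positive-part
ball counts; a drawn type-`0` ball is replaced and `imr (m-1) k` balls of each treatment
type `k` are added (this being repeated `u m` times), until a treatment ball, say of type
`k`, is drawn: then the subject is assigned to treatment `k` (`X m k = 1`), the response
`ξ m k` is observed, the drawn ball is removed and `D m k j` balls of type `j` are added.
`Zt m k` is the number of type-`k` treatment balls after the `m`-th assignment,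
`u m` the number of type-`0` draws between the `(m-1)`-th and the `m`-th assignment,
and `imr m k` the immigration rate `a_{m,k}`. -/
structure IMUModel (K : ℕ) where
  (Ω : Type)
  [mΩ : MeasurableSpace Ω]
  (μ : Measure Ω)
  [isProb : IsProbabilityMeasure μ]
  (ξ : ℕ → Fin K → Ω → ℝ)
  (D : ℕ → Fin K → Fin K → Ω → ℝ)
  (Zt : ℕ → Fin K → Ω → ℝ)
  (Z00 : ℝ)
  (X : ℕ → Fin K → Ω → ℝ)
  (u : ℕ → Ω → ℕ)
  (imr : ℕ → Fin K → Ω → ℝ)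
  (meas_ξ : ∀ m k, Measurable (ξ m k))
  (meas_D : ∀ m k j, Measurable (D m k j))
  (meas_Zt : ∀ m k, Measurable (Zt m k))
  (meas_X : ∀ m k, Measurable (X m k))
  (meas_u : ∀ m, Measurable (u m))
  (meas_imr : ∀ m k, Measurable (imr m k))
  (Z00_pos : 0 < Z00)
  (Zt0_const : ∀ k ω ω', Zt 0 k ω = Zt 0 k ω')
  (Zt0_pos : ∀ k ω, 0 < Zt 0 k ω)
  (X_indicator : ∀ m k ω, X m k ω = 0 ∨ X m k ω = 1)
  (X_sum_one : ∀ m, 1 ≤ m → ∀ ω, (∑ k, X m k ω) = 1)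
  (imr_nonneg : ∀ m k ω, 0 ≤ imr m k ω)
  (update : ∀ m, 1 ≤ m → ∀ k ω,
    Zt m k ω = Zt (m - 1) k ω + (u m ω : ℝ) * imr (m - 1) k ω
      + ∑ j, X m j ω * (D m j k ω - if j = k then 1 else 0))

attribute [instance] IMUModel.mΩ IMUModel.isProb

namespace IMUModel

variable {K : ℕ} (M : IMUModel K)

/-- `N n k` : number of the first `n` subjects assigned to treatment `k`. -/
def N (n : ℕ) (k : Fin K) (ω : M.Ω) : ℝ := ∑ m ∈ Finset.Icc 1 n, M.X m k ω

/-- `N0 n` : total number of type-`0` draws through the `n`-th assignment. -/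
def N0 (n : ℕ) (ω : M.Ω) : ℝ := ∑ m ∈ Finset.Icc 1 n, (M.u m ω : ℝ)

/-- `θv k` : the unknown parameter `θ_k`, the mean of the response `ξ_{1,k}`. -/
def θv (k : Fin K) : ℝ := ∫ ω, M.ξ 1 k ω ∂M.μ

/-- The martingale `Q n k = ∑_{m=1}^n X_{m,k} (ξ_{m,k} - E ξ_{m,k})`. -/
def Q (n : ℕ) (k : Fin K) (ω : M.Ω) : ℝ :=
  ∑ m ∈ Finset.Icc 1 n, M.X m k ω * (M.ξ m k ω - ∫ ω', M.ξ m k ω' ∂M.μ)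

/-- The estimator `θ̂_{n,k} = (α + S_{n,k})/(β + N_{n,k})`. -/
def est (eα eβ : ℝ) (n : ℕ) (k : Fin K) (ω : M.Ω) : ℝ :=
  (eα + ∑ m ∈ Finset.Icc 1 n, M.X m k ω * M.ξ m k ω) / (eβ + M.N n k ω)

/-- The mean replacement matrix `H = E D_1`. -/
def Hm : Matrix (Fin K) (Fin K) ℝ := Matrix.of fun k j => ∫ ω, M.D 1 k j ω ∂M.μ

/-- The history σ-field generated by everything up to the `n`-th assignment. -/
def hist (n : ℕ) : MeasurableSpace M.Ω :=
  ⨆ m ∈ Finset.Icc 1 n,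
    (MeasurableSpace.comap (fun ω => fun k => M.X m k ω)
        (inferInstance : MeasurableSpace (Fin K → ℝ)) ⊔
     MeasurableSpace.comap (fun ω => fun k => M.ξ m k ω)
        (inferInstance : MeasurableSpace (Fin K → ℝ)) ⊔
     MeasurableSpace.comap (fun ω => fun p : Fin K × Fin K => M.D m p.1 p.2 ω)
        (inferInstance : MeasurableSpace (Fin K × Fin K → ℝ)) ⊔
     MeasurableSpace.comap (fun ω => fun k => M.Zt m k ω)
        (inferInstance : MeasurableSpace (Fin K → ℝ)) ⊔
     MeasurableSpace.comap (M.u m) (inferInstance : MeasurableSpace ℕ))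

/-- The total positive-part number of balls in the urn after `l` immigration rounds
following the `m`-th assignment. -/
def totalPos (m l : ℕ) (ω : M.Ω) : ℝ :=
  M.Z00 + ∑ k, max (M.Zt m k ω + (l : ℝ) * M.imr m k ω) 0

/-- The law of the drawing procedure: given the history, the probability that the
immigration ball is drawn exactly `l` times and then the `m`-th subject is assigned
to treatment `k` is `(∏_{j<l} Z00/|Z⁺ + j a|) ⬝ (Z_k + l a_k)⁺ / |Z⁺ + l a|`. -/
def DrawLaw : Prop :=
  ∀ m, 1 ≤ m → ∀ (l : ℕ) (k : Fin K),
    (MeasureTheory.condExp (M.hist (m - 1)) M.μ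
        (Set.indicator {ω | M.u m ω = l ∧ M.X m k ω = 1} fun _ => (1 : ℝ)))
      =ᵐ[M.μ]
    fun ω => (∏ j ∈ Finset.range l, M.Z00 / M.totalPos (m - 1) j ω) *
      (max (M.Zt (m - 1) k ω + (l : ℝ) * M.imr (m - 1) k ω) 0 / M.totalPos (m - 1) l ω)

/-- The fresh randomness `(ξ_m, D_m)` of the `m`-th subject is independent of the past
and of the `m`-th draw. -/
def FreshIndep : Prop :=
  ∀ m, 1 ≤ m →
    Indep
      (MeasurableSpace.comap
          (fun ω => ((fun k => M.ξ m k ω), fun p : Fin K × Fin K => M.D m p.1 p.2 ω))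
          (inferInstance : MeasurableSpace ((Fin K → ℝ) × (Fin K × Fin K → ℝ))))
      (M.hist (m - 1) ⊔
        MeasurableSpace.comap (fun ω => fun k => M.X m k ω)
          (inferInstance : MeasurableSpace (Fin K → ℝ)) ⊔
        MeasurableSpace.comap (M.u m) (inferInstance : MeasurableSpace ℕ))
      M.μ

/-- For each `k`, `{(ξ_{m,k}, D_{m,k1}, …, D_{m,kK}) : m ≥ 1}` is an i.i.d. sequence. -/
def RowIID : Prop :=
  ∀ k : Fin K,
    iIndepFun
      (fun m ω => (⟨M.ξ (m + 1) k ω, fun j => M.D (m + 1) k j ω⟩ : ℝ × (Fin K → ℝ))) M.μ ∧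
    ∀ m, 1 ≤ m →
      IdentDistrib (fun ω => (⟨M.ξ m k ω, fun j => M.D m k j ω⟩ : ℝ × (Fin K → ℝ)))
        (fun ω => (⟨M.ξ 1 k ω, fun j => M.D 1 k j ω⟩ : ℝ × (Fin K → ℝ))) M.μ M.μ

/-- The immigration rates are `a_{m,k} = a_k(θ̂_m)` where `θ̂_m` is the current estimate
of `θ`. -/
def UsesEstimator (a : (Fin K → ℝ) → Fin K → ℝ) (eα eβ : ℝ) : Prop :=
  0 < eα ∧ 0 < eβ ∧ ∀ m k ω, M.imr m k ω = a (fun i => M.est eα eβ m i ω) k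

/-- Assumption (A1): the functions `a_k(⬝) > 0` are continuous and twice differentiable
at `θ`. -/
def A1 (a : (Fin K → ℝ) → Fin K → ℝ) : Prop :=
  ∀ k, (∀ x, 0 < a x k) ∧ Continuous (fun x => a x k) ∧
    ContDiffAt ℝ 2 (fun x => a x k) M.θv

/-- Assumption (A2): moment conditions on the responses and the adding rules. -/
def A2 (δ C : ℝ) : Prop :=
  0 < δ ∧ δ ≤ 2 ∧
  (∀ m k j, 1 ≤ m → Integrable (fun ω => |M.D m k j ω| ^ (2 + δ)) M.μ) ∧
  (∀ m k, 1 ≤ m → Integrable (fun ω => |M.ξ m k ω| ^ (2 + δ)) M.μ) ∧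
  (∀ m k, 1 ≤ m → ∀ᵐ ω ∂M.μ, -C ≤ M.D m k k ω) ∧
  (∀ k j, k ≠ j → (0 < M.Hm k j ∨ ∀ m, 1 ≤ m → ∀ᵐ ω ∂M.μ, 0 ≤ M.D m k j ω))

/-- Assumption (A3): `H 1′ < 1′`, i.e. each row of `H` sums to less than `1`. -/
def A3 : Prop := ∀ k, ∑ j, M.Hm k j < 1

/-- `v(x) = a(x)(I-H)⁻¹ / (a(x)(I-H)⁻¹ 1′)` as a function of the parameter `x`. -/
def vFun (a : (Fin K → ℝ) → Fin K → ℝ) (x : Fin K → ℝ) (k : Fin K) : ℝ :=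
  Matrix.vecMul (fun i => a x i) (1 - M.Hm)⁻¹ k /
    ∑ j, Matrix.vecMul (fun i => a x i) (1 - M.Hm)⁻¹ j

/-- `s = a(θ)(I-H)⁻¹ 1′`. -/
def sv (a : (Fin K → ℝ) → Fin K → ℝ) : ℝ :=
  ∑ j, Matrix.vecMul (fun i => a M.θv i) (1 - M.Hm)⁻¹ j

/-- The limiting allocation proportion `v = v(θ)`. -/
def vv (a : (Fin K → ℝ) → Fin K → ℝ) (k : Fin K) : ℝ := M.vFun a M.θv k

/-- The matrix `∂v(θ)/∂θ = (∂v_k(θ)/∂θ_j)_{j,k}` of partial derivatives at `θ`. -/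
def dv (a : (Fin K → ℝ) → Fin K → ℝ) : Matrix (Fin K) (Fin K) ℝ :=
  Matrix.of fun j k => fderiv ℝ (fun x => M.vFun a x k) M.θv (Pi.single j 1)

/-- The matrix `A = (I-H)⁻¹(I - 1′v)`. -/
def Am (a : (Fin K → ℝ) → Fin K → ℝ) : Matrix (Fin K) (Fin K) ℝ :=
  (1 - M.Hm)⁻¹ * (1 - Matrix.of fun _ j => M.vv a j)

/-- `Σ_k = Var(D_1^{(k)})`, the covariance matrix of the `k`-th row of `D_1`. -/
def SigK (k : Fin K) : Matrix (Fin K) (Fin K) ℝ :=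
  Matrix.of fun i j => rcov M.μ (M.D 1 k i) (M.D 1 k j)

/-- `Σ11 = ∑_k v_k Σ_k`. -/
def Sig11 (a : (Fin K → ℝ) → Fin K → ℝ) : Matrix (Fin K) (Fin K) ℝ :=
  ∑ k, M.vv a k • M.SigK k

/-- `Σ12 = (Cov(D_{1,kj}, ξ_{1,k}))_{j,k}`. -/
def Sig12 : Matrix (Fin K) (Fin K) ℝ :=
  Matrix.of fun j k => rcov M.μ (M.D 1 k j) (M.ξ 1 k)

/-- `σ_{ξk}² = Var(ξ_{1,k})`. -/
def varxi (k : Fin K) : ℝ := rcov M.μ (M.ξ 1 k) (M.ξ 1 k)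

/-- `Σ_D = A′ Σ11 A`. -/
def SigD (a : (Fin K → ℝ) → Fin K → ℝ) : Matrix (Fin K) (Fin K) ℝ :=
  (M.Am a)ᵀ * M.Sig11 a * M.Am a

/-- `Σ_{Dξ} = A′ Σ12 (∂v/∂θ)`. -/
def SigDxi (a : (Fin K → ℝ) → Fin K → ℝ) : Matrix (Fin K) (Fin K) ℝ :=
  (M.Am a)ᵀ * M.Sig12 * M.dv a

/-- `Σ_ξ = (∂v/∂θ)′ diag(σ_{ξ1}²/v_1, …, σ_{ξK}²/v_K) (∂v/∂θ)`. -/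
def Sigxi (a : (Fin K → ℝ) → Fin K → ℝ) : Matrix (Fin K) (Fin K) ℝ :=
  (M.dv a)ᵀ * Matrix.diagonal (fun k => M.varxi k / M.vv a k) * M.dv a

/-- The `2K × 2K` matrix `Λ` with blocks `Σ11`, `Σ12 diag(v)`, `diag(v) Σ12′` and
`Σ22 diag(v)`, where `Σ22 = diag(Var ξ_{1,1}, …, Var ξ_{1,K})`. -/
def Lam (a : (Fin K → ℝ) → Fin K → ℝ) : Matrix (Fin K ⊕ Fin K) (Fin K ⊕ Fin K) ℝ :=
  Matrix.fromBlocks (M.Sig11 a) (M.Sig12 * Matrix.diagonal (M.vv a))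
    (Matrix.diagonal (M.vv a) * (M.Sig12)ᵀ)
    (Matrix.diagonal (fun k => M.varxi k) * Matrix.diagonal (M.vv a))

end IMUModel


/-! ### Auxiliary lemmas for Theorem 4.1 -/

section AuxMatrix

/-- Sign lemma for Z-matrices with positive row sums. -/
theorem aux_mm_sign {K : ℕ} (B : Matrix (Fin K) (Fin K) ℝ)
    (hoff : ∀ i j, i ≠ j → B i j ≤ 0) (hrow : ∀ i, 0 < ∑ j, B i j)
    (x : Fin K → ℝ) (hy : ∀ i, 0 ≤ B.mulVec x i) : ∀ i, 0 ≤ x i := by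
  by_contra hc
  push_neg at hc
  obtain ⟨i1, hi1⟩ := hc
  have hne : (Finset.univ : Finset (Fin K)).Nonempty := ⟨i1, Finset.mem_univ _⟩
  obtain ⟨i0, -, hmin⟩ := Finset.exists_min_image Finset.univ x hne
  have hx0 : x i0 < 0 := lt_of_le_of_lt (hmin i1 (Finset.mem_univ _)) hi1
  have hle : B.mulVec x i0 ≤ (∑ j, B i0 j) * x i0 := by
    rw [Matrix.mulVec, dotProduct, Finset.sum_mul]
    refine Finset.sum_le_sum fun j _ => ?_
    rcases eq_or_ne j i0 with rfl | hj
    · exact le_refl _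
    · exact mul_le_mul_of_nonpos_left (hmin j (Finset.mem_univ _)) (hoff i0 j (Ne.symm hj))
  exact absurd (lt_of_le_of_lt (le_trans (hy i0) hle) (mul_neg_of_pos_of_neg (hrow i0) hx0))
    (lt_irrefl 0)

theorem aux_mm_unit {K : ℕ} (B : Matrix (Fin K) (Fin K) ℝ)
    (hoff : ∀ i j, i ≠ j → B i j ≤ 0) (hrow : ∀ i, 0 < ∑ j, B i j) :
    IsUnit B.det := by
  rw [isUnit_iff_ne_zero]
  intro hdet
  obtain ⟨v, hv0, hv⟩ := Matrix.exists_mulVec_eq_zero_iff.mpr hdet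
  have h1 : ∀ i, 0 ≤ v i := aux_mm_sign B hoff hrow v (fun i => by rw [hv]; exact le_refl 0)
  have h2 : ∀ i, 0 ≤ -v i := by
    have h : B.mulVec (-v) = 0 := by rw [Matrix.mulVec_neg, hv, neg_zero]
    exact aux_mm_sign B hoff hrow (-v) (fun i => by rw [h]; exact le_refl 0)
  exact hv0 (funext fun i => le_antisymm (by simpa using h2 i) (h1 i))

theorem aux_mm_inv_nonneg {K : ℕ} (B : Matrix (Fin K) (Fin K) ℝ)
    (hoff : ∀ i j, i ≠ j → B i j ≤ 0) (hrow : ∀ i, 0 < ∑ j, B i j) :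
    (∀ i j, 0 ≤ B⁻¹ i j) ∧ ∀ j, 0 < B⁻¹ j j := by
  have hu := aux_mm_unit B hoff hrow
  have hBB : B * B⁻¹ = 1 := Matrix.mul_nonsing_inv B hu
  have hcol : ∀ j i, B.mulVec (fun i' => B⁻¹ i' j) i = (1 : Matrix (Fin K) (Fin K) ℝ) i j := by
    intro j i
    rw [← hBB, Matrix.mul_apply, Matrix.mulVec, dotProduct]
  have hnn : ∀ i j, 0 ≤ B⁻¹ i j := by
    intro i j
    refine aux_mm_sign B hoff hrow (fun i' => B⁻¹ i' j) (fun i' => ?_) i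
    rw [hcol j i']
    by_cases h : i' = j <;> simp [Matrix.one_apply, h]
  refine ⟨hnn, fun j => ?_⟩
  rcases lt_or_eq_of_le (hnn j j) with h | h
  · exact h
  · exfalso
    have h1 : B.mulVec (fun i' => B⁻¹ i' j) j = 1 := by simp [hcol j j, Matrix.one_apply]
    rw [Matrix.mulVec, dotProduct] at h1
    have hle : ∑ i, B j i * B⁻¹ i j ≤ 0 := by
      refine Finset.sum_nonpos fun i _ => ?_
      rcases eq_or_ne i j with rfl | hij
      · rw [← h]; ring_nf; exact le_refl 0
      · exact mul_nonpos_of_nonpos_of_nonneg (hoff j i (Ne.symm hij)) (hnn i j)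
    linarith

theorem aux_diag_sandwich {K : ℕ} (G : Matrix (Fin K) (Fin K) ℝ) (v c : Fin K → ℝ)
    (hv : ∀ j, v j ≠ 0) :
    (Matrix.diagonal v * G)ᵀ * Matrix.diagonal (fun j => c j / v j) * (Matrix.diagonal v * G)
      = Gᵀ * Matrix.diagonal (fun j => v j * c j) * G := by
  ext i k
  rw [Matrix.mul_apply, Matrix.mul_apply]
  refine Finset.sum_congr rfl fun l _ => ?_
  rw [Matrix.mul_diagonal, Matrix.mul_diagonal, Matrix.transpose_apply, Matrix.transpose_apply,
    Matrix.diagonal_mul, Matrix.diagonal_mul]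
  field_simp [hv l]

theorem aux_diag_sandwich2 {K : ℕ} (G X : Matrix (Fin K) (Fin K) ℝ) (v c : Fin K → ℝ)
    (hv : ∀ j, v j ≠ 0) :
    (Matrix.diagonal v * G)ᵀ * Matrix.diagonal (fun j => c j / v j) * X
      = Gᵀ * Matrix.diagonal c * X := by
  ext i k
  rw [Matrix.mul_apply, Matrix.mul_apply]
  refine Finset.sum_congr rfl fun l _ => ?_
  rw [Matrix.mul_diagonal, Matrix.mul_diagonal, Matrix.transpose_apply, Matrix.transpose_apply,
    Matrix.diagonal_mul]
  field_simp [hv l]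

end AuxMatrix

section AuxDeriv

attribute [local instance] Matrix.linftyOpNormedRing Matrix.linftyOpNormedAlgebra

/-- The linear map `e ↦ (bv i j * e i)_{ij}`. -/
def auxLmat {K : ℕ} (bv : Fin K → Fin K → ℝ) :
    (Fin K → ℝ) →ₗ[ℝ] Matrix (Fin K) (Fin K) ℝ where
  toFun e := Matrix.of fun i j => bv i j * e i
  map_add' x y := by ext i j; simp [mul_add]
  map_smul' c x := by ext i j; simp [Matrix.of_apply]; ring

/-- The linear map `X ↦ (a₀ ᵥ* X) k`. -/
def auxVmk {K : ℕ} (a0 : Fin K → ℝ) (k : Fin K) :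
    Matrix (Fin K) (Fin K) ℝ →ₗ[ℝ] ℝ where
  toFun X := Matrix.vecMul a0 X k
  map_add' x y := by simp [Matrix.vecMul, dotProduct, Finset.sum_add_distrib, mul_add]
  map_smul' c x := by
    simp [Matrix.vecMul, dotProduct, Finset.mul_sum]
    congr 1; ext i; ring

set_option maxHeartbeats 1600000 in
/-- The directional derivative of `d ↦ v(d)` where
`v(d) = a₀ (I - H(d))⁻¹ / (a₀ (I - H(d))⁻¹ 1')` and `H(d)` has rows `α_i + β_i d_i`. -/
theorem aux_key_fderiv {K : ℕ} (a0 : Fin K → ℝ) (av bv : Fin K → Fin K → ℝ) (d0 : Fin K → ℝ)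
    (hdet : IsUnit (1 - Matrix.of fun i j => av i j + bv i j * d0 i).det)
    (hs : (∑ q, Matrix.vecMul a0 (1 - Matrix.of fun i j => av i j + bv i j * d0 i)⁻¹ q) ≠ 0)
    (j k : Fin K) :
    fderiv ℝ (fun dd : Fin K → ℝ =>
      Matrix.vecMul a0 (1 - Matrix.of fun i j => av i j + bv i j * dd i)⁻¹ k /
        ∑ q, Matrix.vecMul a0 (1 - Matrix.of fun i j => av i j + bv i j * dd i)⁻¹ q)
      d0 (Pi.single j 1) =
      (Matrix.vecMul a0 (1 - Matrix.of fun i j => av i j + bv i j * d0 i)⁻¹ j /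
        ∑ q, Matrix.vecMul a0 (1 - Matrix.of fun i j => av i j + bv i j * d0 i)⁻¹ q) *
      ((∑ m, bv j m * (1 - Matrix.of fun i j => av i j + bv i j * d0 i)⁻¹ m k) -
       (Matrix.vecMul a0 (1 - Matrix.of fun i j => av i j + bv i j * d0 i)⁻¹ k /
        ∑ q, Matrix.vecMul a0 (1 - Matrix.of fun i j => av i j + bv i j * d0 i)⁻¹ q) *
       ∑ m, bv j m * ∑ q, (1 - Matrix.of fun i j => av i j + bv i j * d0 i)⁻¹ m q) := by
  haveI : CompleteSpace (Matrix (Fin K) (Fin K) ℝ) := FiniteDimensional.complete ℝ _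
  set B : Matrix (Fin K) (Fin K) ℝ := 1 - Matrix.of fun i j => av i j + bv i j * d0 i with hB
  set ℓ : (Fin K → ℝ) →L[ℝ] Matrix (Fin K) (Fin K) ℝ :=
    LinearMap.toContinuousLinearMap (auxLmat bv) with hℓ
  have hF : ∀ dd : Fin K → ℝ,
      (1 - Matrix.of fun i j => av i j + bv i j * dd i) = (1 - Matrix.of av) - ℓ dd := by
    intro dd; ext i j
    simp [hℓ, auxLmat, Matrix.sub_apply, Matrix.of_apply]
    ring
  have hFd : HasFDerivAt (fun dd : Fin K → ℝ =>
      (1 - Matrix.of fun i j => av i j + bv i j * dd i)) (-ℓ) d0 := by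
    have h : HasFDerivAt (fun dd : Fin K → ℝ => (1 - Matrix.of av) - ℓ dd) (-ℓ) d0 :=
      (ℓ.hasFDerivAt).const_sub _
    exact h.congr_of_eventuallyEq (Filter.Eventually.of_forall fun dd => (hF dd))
  set u : (Matrix (Fin K) (Fin K) ℝ)ˣ := Matrix.nonsingInvUnit B hdet with hu
  have huc : (u : Matrix (Fin K) (Fin K) ℝ) = B := rfl
  have huinv : ((u⁻¹ : (Matrix (Fin K) (Fin K) ℝ)ˣ) : Matrix (Fin K) (Fin K) ℝ) = B⁻¹ := by
    rw [Matrix.coe_units_inv, huc]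
  have hGinv : HasFDerivAt (Ring.inverse : Matrix (Fin K) (Fin K) ℝ → _)
      (-(ContinuousLinearMap.mulLeftRight ℝ _ B⁻¹ B⁻¹)) B := by
    have h := hasFDerivAt_ringInverse (𝕜 := ℝ) u
    rw [huinv, huc] at h
    exact h
  have hcomp : HasFDerivAt (fun dd : Fin K → ℝ =>
      Ring.inverse (1 - Matrix.of fun i j => av i j + bv i j * dd i))
      ((-(ContinuousLinearMap.mulLeftRight ℝ _ B⁻¹ B⁻¹)).comp (-ℓ)) d0 := by
    exact hGinv.comp d0 hFd
  have hinvd : HasFDerivAt (fun dd : Fin K → ℝ =>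
      (1 - Matrix.of fun i j => av i j + bv i j * dd i)⁻¹)
      ((-(ContinuousLinearMap.mulLeftRight ℝ _ B⁻¹ B⁻¹)).comp (-ℓ)) d0 := by
    refine hcomp.congr_of_eventuallyEq (Filter.Eventually.of_forall fun dd => ?_)
    exact (Matrix.nonsing_inv_eq_ringInverse _)
  set Φ : (Fin K → ℝ) →L[ℝ] Matrix (Fin K) (Fin K) ℝ :=
    (-(ContinuousLinearMap.mulLeftRight ℝ _ B⁻¹ B⁻¹)).comp (-ℓ) with hΦ
  have hΦapp : ∀ e : Fin K → ℝ, Φ e = B⁻¹ * (Matrix.of fun i m => bv i m * e i) * B⁻¹ := by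
    intro e
    show -(B⁻¹ * (-(ℓ e)) * B⁻¹) = _
    rw [mul_neg, neg_mul, neg_neg]
    rfl
  have hnum : ∀ q : Fin K, HasFDerivAt (fun dd : Fin K → ℝ =>
      Matrix.vecMul a0 (1 - Matrix.of fun i j => av i j + bv i j * dd i)⁻¹ q)
      ((LinearMap.toContinuousLinearMap (auxVmk a0 q)).comp Φ) d0 := fun q =>
    ((LinearMap.toContinuousLinearMap (auxVmk a0 q)).hasFDerivAt).comp d0 hinvd
  have hden : HasFDerivAt (fun dd : Fin K → ℝ =>
      ∑ q, Matrix.vecMul a0 (1 - Matrix.of fun i j => av i j + bv i j * dd i)⁻¹ q)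
      (∑ q, (LinearMap.toContinuousLinearMap (auxVmk a0 q)).comp Φ) d0 :=
    HasFDerivAt.fun_sum (fun q _ => hnum q)
  set S : ℝ := ∑ q, Matrix.vecMul a0 B⁻¹ q with hS
  have hSne : S ≠ 0 := hs
  have hinv1 : HasFDerivAt (fun z : ℝ => z⁻¹)
      (ContinuousLinearMap.smulRight (1 : ℝ →L[ℝ] ℝ) (-(S ^ 2)⁻¹)) S := hasFDerivAt_inv hSne
  have hdeninv : HasFDerivAt (fun dd : Fin K → ℝ =>
      (∑ q, Matrix.vecMul a0 (1 - Matrix.of fun i j => av i j + bv i j * dd i)⁻¹ q)⁻¹)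
      ((ContinuousLinearMap.smulRight (1 : ℝ →L[ℝ] ℝ) (-(S ^ 2)⁻¹)).comp
        (∑ q, (LinearMap.toContinuousLinearMap (auxVmk a0 q)).comp Φ)) d0 :=
    hinv1.comp d0 hden
  have hmul := (hnum k).fun_mul hdeninv
  have hfg : (fun dd : Fin K → ℝ =>
      Matrix.vecMul a0 (1 - Matrix.of fun i j => av i j + bv i j * dd i)⁻¹ k /
        ∑ q, Matrix.vecMul a0 (1 - Matrix.of fun i j => av i j + bv i j * dd i)⁻¹ q)
      = fun dd =>
      Matrix.vecMul a0 (1 - Matrix.of fun i j => av i j + bv i j * dd i)⁻¹ k *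
        (∑ q, Matrix.vecMul a0 (1 - Matrix.of fun i j => av i j + bv i j * dd i)⁻¹ q)⁻¹ := by
    funext dd; rw [div_eq_mul_inv]
  rw [hfg, hmul.fderiv]
  have happ : ∀ q : Fin K, ((LinearMap.toContinuousLinearMap (auxVmk a0 q)).comp Φ)
      (Pi.single j 1) = (Matrix.vecMul a0 B⁻¹ j) * ∑ m, bv j m * B⁻¹ m q := by
    intro q
    have h1 : ((LinearMap.toContinuousLinearMap (auxVmk a0 q)).comp Φ) (Pi.single j 1)
        = Matrix.vecMul a0
            (B⁻¹ * (Matrix.of fun i m => bv i m * (Pi.single j 1 : Fin K → ℝ) i) * B⁻¹) q := by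
      simp [ContinuousLinearMap.comp_apply, hΦapp, auxVmk]
    rw [h1, ← Matrix.vecMul_vecMul, ← Matrix.vecMul_vecMul]
    have h2 : Matrix.vecMul (Matrix.vecMul a0 B⁻¹)
        (Matrix.of fun i m => bv i m * (Pi.single j 1 : Fin K → ℝ) i)
        = fun m => (Matrix.vecMul a0 B⁻¹ j) * bv j m := by
      funext m
      rw [Matrix.vecMul, dotProduct]
      rw [Finset.sum_eq_single j]
      · simp [Matrix.of_apply]
      · intro i _ hij
        simp [Matrix.of_apply, Pi.single_apply, hij]
      · intro h; exact absurd (Finset.mem_univ j) h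
    rw [h2]
    rw [Matrix.vecMul, dotProduct, Finset.mul_sum]
    congr 1; funext m; ring
  simp only [ContinuousLinearMap.add_apply, ContinuousLinearMap.smul_apply,
    ContinuousLinearMap.comp_apply, ContinuousLinearMap.sum_apply,
    ContinuousLinearMap.smulRight_apply, ContinuousLinearMap.one_apply, happ, smul_eq_mul]
  have hswap : ∑ m, bv j m * ∑ q, B⁻¹ m q = ∑ q, ∑ m, bv j m * B⁻¹ m q := by
    rw [Finset.sum_comm]
    congr 1; funext m; rw [Finset.mul_sum]
  rw [← hB, ← hS, ← Finset.mul_sum, hswap]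
  set W : ℝ := Matrix.vecMul a0 B⁻¹ j with hW
  set U : ℝ := Matrix.vecMul a0 B⁻¹ k with hU
  set T : ℝ := ∑ m, bv j m * B⁻¹ m k with hT
  set R : ℝ := ∑ q, ∑ m, bv j m * B⁻¹ m q with hR
  field_simp
  ring

end AuxDeriv

section AuxProb

open MeasureTheory

theorem aux_abs_mul_le {p : ℝ} (hp : 2 ≤ p) (x y : ℝ) :
    |x * y| ≤ 2 + |x| ^ p + |y| ^ p := by
  have key : ∀ z : ℝ, z ^ 2 ≤ 1 + |z| ^ p := by
    intro z
    rcases le_total |z| 1 with h | h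
    · have h2 : z ^ 2 ≤ 1 := by nlinarith [abs_nonneg z, sq_abs z]
      have h3 : (0:ℝ) ≤ |z| ^ p := Real.rpow_nonneg (abs_nonneg z) p
      calc z ^ 2 ≤ 1 := h2
        _ ≤ 1 + |z| ^ p := by linarith
    · have h1 : z ^ 2 ≤ |z| ^ p := by
        calc z ^ 2 = |z| ^ (2:ℕ) := (sq_abs z).symm
          _ = |z| ^ ((2:ℕ):ℝ) := (Real.rpow_natCast _ 2).symm
          _ ≤ |z| ^ p := Real.rpow_le_rpow_of_exponent_le h (by exact_mod_cast hp)
      linarith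
  have h1 : |x * y| ≤ x ^ 2 + y ^ 2 := by
    rw [abs_mul]
    rcases le_total |x| |y| with h | h
    · calc |x| * |y| ≤ |y| * |y| := by nlinarith [abs_nonneg x, abs_nonneg y]
        _ = y ^ 2 := by rw [abs_mul_abs_self]; ring
        _ ≤ x ^ 2 + y ^ 2 := by nlinarith [sq_nonneg x]
    · calc |x| * |y| ≤ |x| * |x| := by nlinarith [abs_nonneg x, abs_nonneg y]
        _ = x ^ 2 := by rw [abs_mul_abs_self]; ring
        _ ≤ x ^ 2 + y ^ 2 := by nlinarith [sq_nonneg y]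
  calc |x * y| ≤ x ^ 2 + y ^ 2 := h1
    _ ≤ (1 + |x| ^ p) + (1 + |y| ^ p) := add_le_add (key x) (key y)
    _ = 2 + |x| ^ p + |y| ^ p := by ring

theorem aux_integrable_mul {Ω : Type*} [MeasurableSpace Ω] {μ : Measure Ω}
    [IsProbabilityMeasure μ] {p : ℝ} (hp : 2 ≤ p) {f g : Ω → ℝ}
    (hfm : AEStronglyMeasurable f μ) (hgm : AEStronglyMeasurable g μ)
    (hf : Integrable (fun ω => |f ω| ^ p) μ) (hg : Integrable (fun ω => |g ω| ^ p) μ) :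
    Integrable (fun ω => f ω * g ω) μ := by
  have hbound : Integrable (fun ω => 2 + |f ω| ^ p + |g ω| ^ p) μ :=
    ((integrable_const 2).add hf).add hg
  refine Integrable.mono' hbound (hfm.mul hgm) ?_
  filter_upwards with ω
  simpa only [Real.norm_eq_abs] using aux_abs_mul_le hp (f ω) (g ω)

theorem aux_rcov_const_left {Ω : Type*} [MeasurableSpace Ω] (μ : Measure Ω)
    [IsProbabilityMeasure μ] (c : ℝ) (g : Ω → ℝ) : rcov μ (fun _ => c) g = 0 := by
  simp [rcov, integral_const_mul, mul_assoc]

theorem aux_rcov_const_right {Ω : Type*} [MeasurableSpace Ω] (μ : Measure Ω)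
    [IsProbabilityMeasure μ] (c : ℝ) (g : Ω → ℝ) : rcov μ g (fun _ => c) = 0 := by
  simp [rcov, integral_mul_const, mul_assoc]

theorem aux_rcov_affine {Ω : Type*} [MeasurableSpace Ω] (μ : Measure Ω) [IsProbabilityMeasure μ]
    (c b c' b' : ℝ) (f g : Ω → ℝ) (hf : Integrable f μ) (hg : Integrable g μ)
    (hfg : Integrable (fun ω => f ω * g ω) μ) :
    rcov μ (fun ω => c + b * f ω) (fun ω => c' + b' * g ω) = b * b' * rcov μ f g := by
  have h1 : (fun ω => (c + b * f ω) * (c' + b' * g ω))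
      = fun ω => c * c' + (c * b' * g ω + (c' * b * f ω + b * b' * (f ω * g ω))) := by
    funext ω; ring
  have h2 : ∫ ω, (c + b * f ω) * (c' + b' * g ω) ∂μ
      = c * c' + (c * b') * (∫ ω, g ω ∂μ) + (c' * b) * (∫ ω, f ω ∂μ)
        + (b * b') * ∫ ω, f ω * g ω ∂μ := by
    have hI3 : Integrable (fun ω => c' * b * f ω + b * b' * (f ω * g ω)) μ :=
      (hf.const_mul _).add (hfg.const_mul _)
    have hI2 : Integrable (fun ω => c * b' * g ω + (c' * b * f ω + b * b' * (f ω * g ω))) μ :=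
      (hg.const_mul _).add hI3
    rw [h1, integral_add (integrable_const _) hI2,
      integral_add (hg.const_mul _) hI3,
      integral_add (hf.const_mul _) (hfg.const_mul _)]
    simp [integral_const_mul, mul_assoc]
    ring
  have h3 : ∫ ω, (c + b * f ω) ∂μ = c + b * ∫ ω, f ω ∂μ := by
    rw [integral_add (integrable_const _) (hf.const_mul _)]
    simp [integral_const_mul, mul_assoc]
  have h4 : ∫ ω, (c' + b' * g ω) ∂μ = c' + b' * ∫ ω, g ω ∂μ := by
    rw [integral_add (integrable_const _) (hg.const_mul _)]
    simp [integral_const_mul, mul_assoc]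
  rw [rcov, rcov, h2, h3, h4]
  ring

end AuxProb

/-- **Theorem 4.1, equations (4.2)-(4.3).**  If each `D_{m,kj}` is a linear function of a
single random variable `η_{m,k}` (`D_1^{(k)} = α_k + β_k η_{1,k}`), then with
`d = (E η_{1,1}, …, E η_{1,K})`,
`Σ_D = (∂v/∂d)′ diag(Var η_{1,k}/v_k) (∂v/∂d)` and
`Σ_Dξ = (∂v/∂d)′ diag(Cov(η_{1,k}, ξ_{1,k})/v_k) (∂v/∂θ)`. -/
theorem imu_linear_adding_rule_variance {K : ℕ} (M : IMUModel K)
    (a : (Fin K → ℝ) → Fin K → ℝ) (eα eβ δ C : ℝ)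
    (hest : M.UsesEstimator a eα eβ) (hDL : M.DrawLaw) (hFI : M.FreshIndep)
    (hIID : M.RowIID) (hA1 : M.A1 a) (hA2 : M.A2 δ C) (hA3 : M.A3)
    (η : ℕ → Fin K → M.Ω → ℝ) (hηmeas : ∀ m k, Measurable (η m k))
    (av bv : Fin K → Fin K → ℝ)
    (hlin : ∀ m k j ω, M.D m k j ω = av k j + bv k j * η m k ω) :
    let dmean : Fin K → ℝ := fun k => ∫ ω, η 1 k ω ∂M.μ
    let vd : (Fin K → ℝ) → Fin K → ℝ := fun dd k =>
      Matrix.vecMul (fun i => a M.θv i)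
          (1 - Matrix.of fun i j => av i j + bv i j * dd i)⁻¹ k /
        ∑ j, Matrix.vecMul (fun i => a M.θv i)
          (1 - Matrix.of fun i j => av i j + bv i j * dd i)⁻¹ j
    let dvd : Matrix (Fin K) (Fin K) ℝ :=
      Matrix.of fun j k => fderiv ℝ (fun dd => vd dd k) dmean (Pi.single j 1)
    M.SigD a =
      dvdᵀ * Matrix.diagonal (fun k => rcov M.μ (η 1 k) (η 1 k) / M.vv a k) * dvd ∧
    M.SigDxi a =
      dvdᵀ * Matrix.diagonal (fun k => rcov M.μ (η 1 k) (M.ξ 1 k) / M.vv a k) * M.dv a := by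
  intro dmean vd dvd
  rcases Nat.eq_zero_or_pos K with rfl | hK
  · constructor <;> (ext i j; exact i.elim0)
  obtain ⟨hδ, hδ2, hDint, hξint, hDdiag, hHsign⟩ := hA2
  have hp : (2:ℝ) ≤ 2 + δ := by linarith
  -- basic integrability
  have hone : Integrable (fun _ : M.Ω => |(1:ℝ)| ^ (2 + δ)) M.μ := by
    simpa using (integrable_const (1:ℝ) : Integrable _ M.μ)
  have hDD : ∀ i j l, Integrable (fun ω => M.D 1 i j ω * M.D 1 i l ω) M.μ := fun i j l =>
    aux_integrable_mul hp (M.meas_D 1 i j).aestronglyMeasurable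
      (M.meas_D 1 i l).aestronglyMeasurable (hDint 1 i j le_rfl) (hDint 1 i l le_rfl)
  have hD1 : ∀ i j, Integrable (M.D 1 i j) M.μ := by
    intro i j
    have h := aux_integrable_mul hp (M.meas_D 1 i j).aestronglyMeasurable
      aestronglyMeasurable_const (hDint 1 i j le_rfl) hone
    simpa using h
  have hξ1 : ∀ k, Integrable (M.ξ 1 k) M.μ := by
    intro k
    have h := aux_integrable_mul hp (M.meas_ξ 1 k).aestronglyMeasurable
      aestronglyMeasurable_const (hξint 1 k le_rfl) hone
    simpa using h
  have hDξ : ∀ k j, Integrable (fun ω => M.D 1 k j ω * M.ξ 1 k ω) M.μ := fun k j =>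
    aux_integrable_mul hp (M.meas_D 1 k j).aestronglyMeasurable
      (M.meas_ξ 1 k).aestronglyMeasurable (hDint 1 k j le_rfl) (hξint 1 k le_rfl)
  -- integrability of η
  have hηint : ∀ k j0, bv k j0 ≠ 0 → Integrable (η 1 k) M.μ := by
    intro k j0 hb
    have he : η 1 k = fun ω => (M.D 1 k j0 ω - av k j0) * (bv k j0)⁻¹ := by
      funext ω; rw [hlin 1 k j0 ω]; field_simp; ring
    rw [he]; exact ((hD1 k j0).sub (integrable_const _)).mul_const _
  have hηη : ∀ k j0, bv k j0 ≠ 0 → Integrable (fun ω => η 1 k ω * η 1 k ω) M.μ := by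
    intro k j0 hb
    have he : (fun ω => η 1 k ω * η 1 k ω) = fun ω =>
        (M.D 1 k j0 ω * M.D 1 k j0 ω + (-2 * av k j0) * M.D 1 k j0 ω + av k j0 ^ 2)
          * ((bv k j0)⁻¹ * (bv k j0)⁻¹) := by
      funext ω; rw [hlin 1 k j0 ω]; field_simp; ring
    rw [he]
    exact (((hDD k j0 j0).add ((hD1 k j0).const_mul _)).add (integrable_const _)).mul_const _
  have hηξ : ∀ k j0, bv k j0 ≠ 0 → Integrable (fun ω => η 1 k ω * M.ξ 1 k ω) M.μ := by
    intro k j0 hb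
    have he : (fun ω => η 1 k ω * M.ξ 1 k ω) = fun ω =>
        (M.D 1 k j0 ω * M.ξ 1 k ω + (-av k j0) * M.ξ 1 k ω) * (bv k j0)⁻¹ := by
      funext ω; rw [hlin 1 k j0 ω]; field_simp; ring
    rw [he]
    exact ((hDξ k j0).add ((hξ1 k).const_mul _)).mul_const _
  -- the mean of the replacement matrix
  have hdm : dmean = fun k => ∫ ω, η 1 k ω ∂M.μ := rfl
  have hHm : M.Hm = Matrix.of fun i j => av i j + bv i j * dmean i := by
    ext i j
    simp only [IMUModel.Hm, Matrix.of_apply]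
    by_cases hb : bv i j = 0
    · have he : M.D 1 i j = fun _ => av i j := by
        funext ω; rw [hlin 1 i j ω, hb]; ring
      rw [he, hb]; simp
    · have he : M.D 1 i j = fun ω => av i j + bv i j * η 1 i ω := funext (hlin 1 i j)
      rw [he, integral_add (integrable_const _) ((hηint i j hb).const_mul _)]
      rw [hdm]
      simp [integral_const_mul]
  -- covariance identities
  have hDconst : ∀ i y, bv i y = 0 → M.D 1 i y = fun _ => av i y := by
    intro i y hb; funext ω; rw [hlin 1 i y ω, hb]; ring
  have hDaff : ∀ i y, M.D 1 i y = fun ω => av i y + bv i y * η 1 i ω := fun i y =>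
    funext (hlin 1 i y)
  have hSigK : ∀ i, M.SigK i =
      Matrix.of fun y x => bv i y * bv i x * rcov M.μ (η 1 i) (η 1 i) := by
    intro i; ext y x
    simp only [IMUModel.SigK, Matrix.of_apply]
    by_cases hy : bv i y = 0
    · rw [hDconst i y hy, aux_rcov_const_left, hy]; ring
    by_cases hx : bv i x = 0
    · rw [hDconst i x hx, aux_rcov_const_right, hx]; ring
    rw [hDaff i y, hDaff i x,
      aux_rcov_affine M.μ _ _ _ _ _ _ (hηint i y hy) (hηint i y hy) (hηη i y hy)]
  have hSig12 : M.Sig12 = Matrix.of fun j k => bv k j * rcov M.μ (η 1 k) (M.ξ 1 k) := by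
    ext j k
    simp only [IMUModel.Sig12, Matrix.of_apply]
    by_cases hb : bv k j = 0
    · rw [hDconst k j hb, aux_rcov_const_left, hb]; ring
    have hξid : M.ξ 1 k = fun ω => (0:ℝ) + 1 * M.ξ 1 k ω := by funext ω; ring
    nth_rewrite 1 [hDaff k j, hξid]
    rw [aux_rcov_affine M.μ _ _ _ _ _ _ (hηint k j hb) (hξ1 k) (hηξ k j hb)]
    ring
  -- the matrix B = I - H
  set B : Matrix (Fin K) (Fin K) ℝ := 1 - M.Hm with hB
  have hHnn : ∀ i j, i ≠ j → 0 ≤ M.Hm i j := by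
    intro i j hij
    rcases hHsign i j hij with hpos | hae
    · exact le_of_lt hpos
    · exact integral_nonneg_of_ae (hae 1 le_rfl)
  have hoff : ∀ i j, i ≠ j → B i j ≤ 0 := by
    intro i j hij
    rw [hB, Matrix.sub_apply, Matrix.one_apply_ne hij]
    linarith [hHnn i j hij]
  have hrow : ∀ i, 0 < ∑ j, B i j := by
    intro i
    have h1 : ∑ j, B i j = (∑ j, (1 : Matrix (Fin K) (Fin K) ℝ) i j) - ∑ j, M.Hm i j := by
      rw [hB, ← Finset.sum_sub_distrib]
      exact Finset.sum_congr rfl fun j _ => Matrix.sub_apply _ _ _ _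
    have h2 : ∑ j, (1 : Matrix (Fin K) (Fin K) ℝ) i j = 1 := by
      simp [Matrix.one_apply]
    have := hA3 i
    rw [h1, h2]; linarith
  have hdet : IsUnit B.det := aux_mm_unit B hoff hrow
  obtain ⟨hinn, hidd⟩ := aux_mm_inv_nonneg B hoff hrow
  -- positivity of v
  have ha0 : ∀ i, 0 < a M.θv i := fun i => (hA1 i).1 _
  have hw : ∀ q, 0 < Matrix.vecMul (fun i => a M.θv i) B⁻¹ q := by
    intro q
    rw [Matrix.vecMul, dotProduct]
    exact Finset.sum_pos' (fun i _ => mul_nonneg (le_of_lt (ha0 i)) (hinn i q))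
      ⟨q, Finset.mem_univ q, mul_pos (ha0 q) (hidd q)⟩
  have hS : 0 < ∑ q, Matrix.vecMul (fun i => a M.θv i) B⁻¹ q :=
    Finset.sum_pos (fun q _ => hw q) ⟨⟨0, hK⟩, Finset.mem_univ _⟩
  have hSne : (∑ q, Matrix.vecMul (fun i => a M.θv i) B⁻¹ q) ≠ 0 := ne_of_gt hS
  have hvv : ∀ k, M.vv a k = Matrix.vecMul (fun i => a M.θv i) B⁻¹ k /
      ∑ q, Matrix.vecMul (fun i => a M.θv i) B⁻¹ q := fun k => rfl
  have hvpos : ∀ k, 0 < M.vv a k := fun k => by rw [hvv k]; exact div_pos (hw k) hS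
  have hvne : ∀ k, M.vv a k ≠ 0 := fun k => ne_of_gt (hvpos k)
  -- transporting the invertibility to the matrix at `dmean`
  have hBeq : (1 - Matrix.of fun i j => av i j + bv i j * dmean i) = B := by
    rw [hB, hHm]
  have hdet' : IsUnit (1 - Matrix.of fun i j => av i j + bv i j * dmean i).det := by
    rw [hBeq]; exact hdet
  have hs' : (∑ q, Matrix.vecMul (fun i => a M.θv i)
      (1 - Matrix.of fun i j => av i j + bv i j * dmean i)⁻¹ q) ≠ 0 := by
    rw [hBeq]; exact hSne
  -- entries of A
  have hAm : ∀ m k, M.Am a m k = B⁻¹ m k - M.vv a k * ∑ q, B⁻¹ m q := by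
    intro m k
    have h1 : M.Am a m k = ∑ q, B⁻¹ m q * ((1 : Matrix (Fin K) (Fin K) ℝ) q k - M.vv a k) := by
      rw [IMUModel.Am, ← hB, Matrix.mul_apply]
      exact Finset.sum_congr rfl fun q _ => by rw [Matrix.sub_apply, Matrix.of_apply]
    rw [h1]
    have h2 : ∀ q, B⁻¹ m q * ((1 : Matrix (Fin K) (Fin K) ℝ) q k - M.vv a k)
        = (if q = k then B⁻¹ m q else 0) - M.vv a k * B⁻¹ m q := by
      intro q
      by_cases h : q = k <;> simp [Matrix.one_apply, h] <;> ring
    rw [Finset.sum_congr rfl fun q _ => h2 q, Finset.sum_sub_distrib,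
      Finset.sum_ite_eq' Finset.univ k (fun q => B⁻¹ m q), ← Finset.mul_sum]
    simp
  -- the matrix G = bv * A and the derivative matrix
  set G : Matrix (Fin K) (Fin K) ℝ := Matrix.of bv * M.Am a with hG
  have hGent : ∀ j k, G j k =
      (∑ m, bv j m * B⁻¹ m k) - M.vv a k * ∑ m, bv j m * ∑ q, B⁻¹ m q := by
    intro j k
    rw [hG, Matrix.mul_apply]
    calc ∑ m, Matrix.of bv j m * M.Am a m k
        = ∑ m, (bv j m * B⁻¹ m k - M.vv a k * (bv j m * ∑ q, B⁻¹ m q)) := by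
          refine Finset.sum_congr rfl fun m _ => ?_
          rw [Matrix.of_apply, hAm m k]; ring
      _ = (∑ m, bv j m * B⁻¹ m k) - M.vv a k * ∑ m, bv j m * ∑ q, B⁻¹ m q := by
          rw [Finset.sum_sub_distrib, ← Finset.mul_sum]
  have hdvdmat : dvd = Matrix.diagonal (M.vv a) * G := by
    ext j k
    have h0 : dvd j k = fderiv ℝ (fun dd => vd dd k) dmean (Pi.single j 1) := rfl
    rw [h0]
    have h1 := aux_key_fderiv (fun i => a M.θv i) av bv dmean hdet' hs' j k
    rw [show (fun dd => vd dd k) = (fun dd : Fin K → ℝ =>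
        Matrix.vecMul (fun i => a M.θv i)
            (1 - Matrix.of fun i j => av i j + bv i j * dd i)⁻¹ k /
          ∑ q, Matrix.vecMul (fun i => a M.θv i)
            (1 - Matrix.of fun i j => av i j + bv i j * dd i)⁻¹ q) from rfl]
    rw [h1, hBeq, Matrix.diagonal_mul, hGent j k, hvv j, hvv k]
  -- identification of Σ₁₁
  have hSig11 : M.Sig11 a = (Matrix.of bv)ᵀ *
      Matrix.diagonal (fun l => M.vv a l * rcov M.μ (η 1 l) (η 1 l)) * Matrix.of bv := by
    ext y x
    have h1 : M.Sig11 a y x = ∑ l, M.vv a l * (bv l y * bv l x * rcov M.μ (η 1 l) (η 1 l)) := by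
      rw [IMUModel.Sig11, Matrix.sum_apply]
      exact Finset.sum_congr rfl fun l _ => by rw [Matrix.smul_apply, hSigK l]; rfl
    have h2 : ((Matrix.of bv)ᵀ *
        Matrix.diagonal (fun l => M.vv a l * rcov M.μ (η 1 l) (η 1 l)) * Matrix.of bv) y x
        = ∑ l, bv l y * (M.vv a l * rcov M.μ (η 1 l) (η 1 l)) * bv l x := by
      rw [Matrix.mul_apply]
      exact Finset.sum_congr rfl fun l _ => by
        rw [Matrix.mul_diagonal, Matrix.transpose_apply, Matrix.of_apply, Matrix.of_apply]
    rw [h1, h2]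
    exact Finset.sum_congr rfl fun l _ => by ring
  -- identification of Σ₁₂
  have hSig12m : M.Sig12 = (Matrix.of bv)ᵀ *
      Matrix.diagonal (fun l => rcov M.μ (η 1 l) (M.ξ 1 l)) := by
    ext j k
    rw [hSig12, Matrix.of_apply, Matrix.mul_diagonal, Matrix.transpose_apply, Matrix.of_apply]
  constructor
  · -- equation (4.2)
    have hL : M.SigD a = Gᵀ *
        Matrix.diagonal (fun l => M.vv a l * rcov M.μ (η 1 l) (η 1 l)) * G := by
      rw [IMUModel.SigD, hSig11, hG, Matrix.transpose_mul]
      simp only [Matrix.mul_assoc]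
    rw [hL, hdvdmat, aux_diag_sandwich G (M.vv a) (fun l => rcov M.μ (η 1 l) (η 1 l)) hvne]
  · -- equation (4.3)
    have hL : M.SigDxi a = Gᵀ *
        Matrix.diagonal (fun l => rcov M.μ (η 1 l) (M.ξ 1 l)) * M.dv a := by
      rw [IMUModel.SigDxi, hSig12m, hG, Matrix.transpose_mul]
      simp only [Matrix.mul_assoc]
    rw [hL, hdvdmat,
      aux_diag_sandwich2 G (M.dv a) (M.vv a) (fun l => rcov M.μ (η 1 l) (M.ξ 1 l)) hvne]
end
end

section
/- Let a be a fixed positive K-dimensional row vector, and let H(d) be a K×K matrix depending on d = (d_1,…,d_K) through its rows h_k(d) = α_k + β_k d_k for fixed row vectors α_k, β_k; let 𝒦 be the matrix with rows β_1,…,β_K. Suppose I − H(d) is invertible and a(I−H(d))^{-1}1′ ≠ 0. Define v(d) = a(I−H(d))^{-1} / (a(I−H(d))^{-1}1′) and A = (I−H)^{-1}(I − 1′v). Then ∂(I−H)^{-1}/∂d_k = (I−H)^{-1} diag(1_k) 𝒦 (I−H)^{-1}, and ∂v/∂d_k = v diag(1_k) 𝒦 A for each k; equivalently, ∂v/∂d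 = diag(v) 𝒦 A, where 1_k is the vector with k-th entry 1 and all other entries 0. -/
open MeasureTheory ProbabilityTheory Filter Asymptotics Matrix Topology

noncomputable section

/-- `H(d)`, the matrix whose rows are `h_k = α_k + β_k d_k`. -/
def Hlin {K : ℕ} (av bv : Fin K → Fin K → ℝ) (d : Fin K → ℝ) :
    Matrix (Fin K) (Fin K) ℝ :=
  Matrix.of fun k j => av k j + bv k j * d k

/-- `v(d) = a (I - H(d))⁻¹ / (a (I - H(d))⁻¹ 1′)`. -/
def vlin {K : ℕ} (a : Fin K → ℝ) (av bv : Fin K → Fin K → ℝ)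
    (d : Fin K → ℝ) (k : Fin K) : ℝ :=
  Matrix.vecMul a (1 - Hlin av bv d)⁻¹ k / ∑ j, Matrix.vecMul a (1 - Hlin av bv d)⁻¹ j

attribute [local instance] Matrix.linftyOpNormedAddCommGroup Matrix.linftyOpNormedRing
  Matrix.linftyOpNormedAlgebra

/-- The linear map `x ↦ (bv k j * x k)` as a matrix. -/
def bmapAux {K : ℕ} (bv : Fin K → Fin K → ℝ) : (Fin K → ℝ) →ₗ[ℝ] Matrix (Fin K) (Fin K) ℝ where
  toFun x := Matrix.of fun k j => bv k j * x k
  map_add' x y := by ext k j; simp [mul_add]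
  map_smul' c x := by ext k j; simp [Matrix.smul_apply]; ring

/-- Entry evaluation as a linear map. -/
def entryAux {K : ℕ} (i j : Fin K) : Matrix (Fin K) (Fin K) ℝ →ₗ[ℝ] ℝ where
  toFun M := M i j
  map_add' _ _ := rfl
  map_smul' _ _ := rfl

/-- `M ↦ (w ᵥ* M) j` as a linear map. -/
def vmAux {K : ℕ} (w : Fin K → ℝ) (j : Fin K) : Matrix (Fin K) (Fin K) ℝ →ₗ[ℝ] ℝ where
  toFun M := Matrix.vecMul w M j
  map_add' M N := by simp [Matrix.vecMul_add]
  map_smul' c M := by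
    simp [Matrix.vecMul, dotProduct, Finset.mul_sum, mul_left_comm]

/-- `M ↦ ∑ j, (w ᵥ* M) j` as a linear map. -/
def ssumAux {K : ℕ} (w : Fin K → ℝ) : Matrix (Fin K) (Fin K) ℝ →ₗ[ℝ] ℝ where
  toFun M := ∑ j, Matrix.vecMul w M j
  map_add' M N := by simp [Matrix.vecMul_add, Finset.sum_add_distrib]
  map_smul' c M := by
    simp [Matrix.vecMul, dotProduct, Finset.mul_sum, mul_left_comm]

set_option maxHeartbeats 1600000 in
/-- **Matrix-calculus identities in the proof of Theorem 4.1.**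
`∂(I-H)⁻¹/∂d_k = (I-H)⁻¹ diag(1_k) 𝒦 (I-H)⁻¹` and `∂v/∂d_k = v diag(1_k) 𝒦 A`;
equivalently `∂v/∂d = diag(v) 𝒦 A`, with `A = (I-H)⁻¹（I - 1′v)`. -/
theorem vlin_fderiv_formulas {K : ℕ} (a : Fin K → ℝ) (ha : ∀ k, 0 < a k)
    (av bv : Fin K → Fin K → ℝ) (d : Fin K → ℝ)
    (hinv : IsUnit (1 - Hlin av bv d))
    (hden : ∑ j, Matrix.vecMul a (1 - Hlin av bv d)⁻¹ j ≠ 0) :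
    (∀ k i j,
      fderiv ℝ (fun dd => (1 - Hlin av bv dd)⁻¹ i j) d (Pi.single k 1) =
        (((1 - Hlin av bv d)⁻¹ * Matrix.diagonal (Pi.single k 1) * Matrix.of bv *
          (1 - Hlin av bv d)⁻¹ : Matrix (Fin K) (Fin K) ℝ)) i j) ∧
    (∀ k j,
      fderiv ℝ (fun dd => vlin a av bv dd j) d (Pi.single k 1) =
        Matrix.vecMul (Matrix.vecMul (Matrix.vecMul (vlin a av bv d)
            (Matrix.diagonal (Pi.single k 1))) (Matrix.of bv))
          ((1 - Hlin av bv d)⁻¹ * (1 - Matrix.of fun _ j' => vlin a av bv d j')) j) ∧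
    (Matrix.of (fun j k => fderiv ℝ (fun dd => vlin a av bv dd k) d (Pi.single j 1)) =
      Matrix.diagonal (vlin a av bv d) * Matrix.of bv *
        ((1 - Hlin av bv d)⁻¹ * (1 - Matrix.of fun _ j' => vlin a av bv d j'))) := by
    classical
  haveI : CompleteSpace (Matrix (Fin K) (Fin K) ℝ) := FiniteDimensional.complete ℝ _
  set G : Matrix (Fin K) (Fin K) ℝ := (1 - Hlin av bv d)⁻¹ with hGdef
  -- derivative of dd ↦ 1 - Hlin av bv dd
  have hGlin : HasFDerivAt (fun dd => 1 - Hlin av bv dd)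
      (-(LinearMap.toContinuousLinearMap (bmapAux bv))) d := by
    have h1 : HasFDerivAt (fun dd : Fin K → ℝ => (1 - Matrix.of av : Matrix (Fin K) (Fin K) ℝ) -
        LinearMap.toContinuousLinearMap (bmapAux bv) dd)
        (-(LinearMap.toContinuousLinearMap (bmapAux bv))) d :=
      (LinearMap.toContinuousLinearMap (bmapAux bv)).hasFDerivAt.const_sub _
    convert h1 using 2 with dd
    ext k j
    simp [Hlin, bmapAux, Matrix.sub_apply]
    ring
  -- derivative of the inverse
  have hRinv := hasFDerivAt_ringInverse (𝕜 := ℝ) hinv.unit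
  rw [hinv.unit_spec] at hRinv
  have hcoe : (↑hinv.unit⁻¹ : Matrix (Fin K) (Fin K) ℝ) = G := by
    have h2 := Ring.inverse_unit hinv.unit
    rw [hinv.unit_spec] at h2
    rw [hGdef, Matrix.nonsing_inv_eq_ringInverse, ← h2]
  rw [hcoe] at hRinv
  have hInv : HasFDerivAt (fun dd => (1 - Hlin av bv dd)⁻¹)
      ((-(ContinuousLinearMap.mulLeftRight ℝ _ G G)).comp
        (-(LinearMap.toContinuousLinearMap (bmapAux bv)))) d := by
    have := hRinv.comp d hGlin
    simpa [Matrix.nonsing_inv_eq_ringInverse, Function.comp_def] using this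
  -- value of the derivative
  have hval : ∀ x : Fin K → ℝ,
      ((-(ContinuousLinearMap.mulLeftRight ℝ _ G G)).comp
        (-(LinearMap.toContinuousLinearMap (bmapAux bv)))) x
      = G * (Matrix.of fun k j => bv k j * x k) * G := by
    intro x
    erw [ContinuousLinearMap.comp_apply]
    simp [ContinuousLinearMap.mulLeftRight_apply, bmapAux]
    change -(G * -(Matrix.of fun k j => bv k j * x k) * G) = _
    rw [Matrix.mul_neg, Matrix.neg_mul, neg_neg]
  have hmid : ∀ k : Fin K, (Matrix.of fun k' j' => bv k' j' * (Pi.single k 1 : Fin K → ℝ) k')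
      = Matrix.diagonal (Pi.single k 1) * Matrix.of bv := by
    intro k
    ext i' j'
    simp [Matrix.diagonal_mul, mul_comm]
  -- Part 1
  have part1 : ∀ (k i j : Fin K),
      fderiv ℝ (fun dd => (1 - Hlin av bv dd)⁻¹ i j) d (Pi.single k 1) =
        ((G * Matrix.diagonal (Pi.single k 1) * Matrix.of bv * G : Matrix (Fin K) (Fin K) ℝ)) i j := by
    intro k i j
    have hE : HasFDerivAt (fun dd => (1 - Hlin av bv dd)⁻¹ i j)
        ((LinearMap.toContinuousLinearMap (entryAux i j)).comp
          ((-(ContinuousLinearMap.mulLeftRight ℝ _ G G)).comp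
            (-(LinearMap.toContinuousLinearMap (bmapAux bv))))) d :=
      ((LinearMap.toContinuousLinearMap (entryAux i j)).hasFDerivAt).comp d hInv
    erw [hE.fderiv, ContinuousLinearMap.comp_apply, hval, hmid, ← Matrix.mul_assoc]
    rfl
  -- Part 2
  set s : ℝ := ∑ j, Matrix.vecMul a G j with hsdef
  have part2 : ∀ (k j : Fin K),
      fderiv ℝ (fun dd => vlin a av bv dd j) d (Pi.single k 1) =
        Matrix.vecMul (Matrix.vecMul (Matrix.vecMul (vlin a av bv d)
            (Matrix.diagonal (Pi.single k 1))) (Matrix.of bv))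
          (G * (1 - Matrix.of fun _ j' => vlin a av bv d j')) j := by
    intro k j
    have hf : HasFDerivAt (fun dd => Matrix.vecMul a (1 - Hlin av bv dd)⁻¹ j)
        ((LinearMap.toContinuousLinearMap (vmAux a j)).comp
          ((-(ContinuousLinearMap.mulLeftRight ℝ _ G G)).comp
            (-(LinearMap.toContinuousLinearMap (bmapAux bv))))) d :=
      ((LinearMap.toContinuousLinearMap (vmAux a j)).hasFDerivAt).comp d hInv
    have hs : HasFDerivAt (fun dd => ∑ j', Matrix.vecMul a (1 - Hlin av bv dd)⁻¹ j')
        ((LinearMap.toContinuousLinearMap (ssumAux a)).comp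
          ((-(ContinuousLinearMap.mulLeftRight ℝ _ G G)).comp
            (-(LinearMap.toContinuousLinearMap (bmapAux bv))))) d :=
      ((LinearMap.toContinuousLinearMap (ssumAux a)).hasFDerivAt).comp d hInv
    have hsinv := (hasFDerivAt_inv' (𝕜 := ℝ) hden).comp d hs
    have hprod := hf.mul hsinv
    have heq : (fun dd => vlin a av bv dd j) = fun dd =>
        (Matrix.vecMul a (1 - Hlin av bv dd)⁻¹ j) *
          (∑ j', Matrix.vecMul a (1 - Hlin av bv dd)⁻¹ j')⁻¹ := by
      funext dd; simp [vlin, div_eq_mul_inv]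
    simp only [Function.comp_def, Pi.mul_def] at hprod
    rw [heq, hprod.fderiv]
    simp only [ContinuousLinearMap.add_apply, ContinuousLinearMap.smul_apply,
      ContinuousLinearMap.comp_apply, ContinuousLinearMap.neg_apply,
      ContinuousLinearMap.mulLeftRight_apply, smul_eq_mul,
      LinearMap.coe_toContinuousLinearMap', hval, hmid, vmAux, ssumAux, LinearMap.coe_mk,
      AddHom.coe_mk]
    erw [ContinuousLinearMap.comp_apply, hval, ContinuousLinearMap.comp_apply, hval, hmid]
    simp only [LinearMap.coe_toContinuousLinearMap', LinearMap.coe_mk, AddHom.coe_mk]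
    set u : Fin K → ℝ := Matrix.vecMul a G with hudef
    set N : Matrix (Fin K) (Fin K) ℝ := Matrix.diagonal (Pi.single k 1) * Matrix.of bv with hNdef
    set t : Fin K → ℝ := Matrix.vecMul (Matrix.vecMul u N) G with htdef
    have hab : Matrix.vecMul a (G * N * G) = t := by
      rw [htdef, hudef, Matrix.vecMul_vecMul, Matrix.vecMul_vecMul, Matrix.mul_assoc]
    clear_value u N t
    have hvfun : vlin a av bv d = s⁻¹ • u := by
      funext j'
      rw [hsdef, hudef, hGdef]
      simp [vlin, div_eq_mul_inv, mul_comm]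
    have hsum : (∑ j' : Fin K, u j') = s := hsdef.symm
    clear_value s
    clear hsdef hudef
    rw [hab, hvfun, hsum]
    simp only [Matrix.smul_vecMul, Pi.smul_apply, smul_eq_mul, Matrix.vecMul_vecMul]
    rw [← hNdef, ← Matrix.mul_assoc, ← Matrix.vecMul_vecMul, ← Matrix.vecMul_vecMul, ← htdef,
      Matrix.vecMul_sub, Matrix.vecMul_one, Pi.sub_apply]
    have hV : (t ᵥ* (Matrix.of fun _ j' => s⁻¹ * u j')) j = (∑ i, t i) * (s⁻¹ * u j) := by
      simp [Matrix.vecMul, dotProduct, Finset.sum_mul]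
    rw [hV]
    ring
  refine ⟨part1, part2, ?_⟩
  apply Matrix.ext
  intro j k
  rw [Matrix.of_apply, part2 j k]
  have h1 : Matrix.vecMul (vlin a av bv d) (Matrix.diagonal (Pi.single j 1)) =
      Pi.single j (vlin a av bv d j) := by
    funext i
    rw [Matrix.vecMul_diagonal]
    by_cases h : i = j <;> simp [h, Pi.single_apply]
  rw [h1]
  simp [Matrix.vecMul, dotProduct, Matrix.mul_apply, Matrix.diagonal_apply,
    Pi.single_apply, ite_mul, zero_mul, Finset.sum_ite_eq, mul_assoc]
end
end
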